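/- Holsztyński's theorem: if T₁, …, Tₙ are (metrizable) continua and uᵢ : Tᵢ → [0,1] are continuous surjections for i = 1,…,n, then the product map u₁ × ⋯ × uₙ : T₁ × ⋯ × Tₙ → [0,1]ⁿ is essential, i.e., every continuous map g : T₁ × ⋯ × Tₙ → [0,1]ⁿ that agrees with u₁ × ⋯ × uₙ on the preimage of the boundary ∂[0,1]ⁿ is surjective. -/

import Mathlib

open Set Function

/-- The geometric boundary of the cube `[0,1]ⁿ`: points with some coordinate 0 or 1. -/
def cubeBoundary (n : ℕ) : Set (Fin n → unitInterval) :=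
  {p | ∃ i, p i = 0 ∨ p i = 1}

section HolsztynskiAux

open Finset

lemma even_card_of_invol_aux {α : Type*} [DecidableEq α] :
    ∀ (N : ℕ) (s : Finset α), s.card ≤ N → ∀ (f : α → α),
    (∀ a ∈ s, f a ∈ s) → (∀ a ∈ s, f (f a) = a) → (∀ a ∈ s, f a ≠ a) →
    Even s.card := by
  intro N
  induction N with
  | zero => intro s hs f _ _ _; simp [Nat.le_zero.mp hs]
  | succ N ihN =>
    intro s hs f hmem hinv hne
    rcases s.eq_empty_or_nonempty with rfl | ⟨a, ha⟩
    · simp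
    · have hfa : f a ∈ s := hmem a ha
      have hne' : f a ≠ a := hne a ha
      set s' := (s.erase a).erase (f a) with hs'
      have hsubs : s' ⊆ s := (Finset.erase_subset _ _).trans (Finset.erase_subset _ _)
      have hmem' : ∀ b ∈ s', f b ∈ s' := by
        intro b hb
        have hbs : b ∈ s := hsubs hb
        have hb1 : b ≠ f a := Finset.ne_of_mem_erase hb
        have hb2 : b ≠ a := Finset.ne_of_mem_erase (Finset.mem_of_mem_erase hb)
        refine Finset.mem_erase.mpr ⟨?_, Finset.mem_erase.mpr ⟨?_, hmem b hbs⟩⟩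
        · intro h; apply hb2; rw [← hinv b hbs, h, hinv a ha]
        · intro h; apply hb1; rw [← hinv b hbs, h]
      have hcard : s.card = s'.card + 2 := by
        rw [hs', Finset.card_erase_of_mem (Finset.mem_erase.mpr ⟨hne', hfa⟩),
          Finset.card_erase_of_mem ha]
        have h2 : 2 ≤ s.card := Finset.one_lt_card.mpr ⟨f a, hfa, a, ha, hne'⟩
        omega
      have hev : Even s'.card :=
        ihN s' (by omega) f hmem' (fun b hb => hinv b (hsubs hb)) (fun b hb => hne b (hsubs hb))
      rw [hcard]
      rcases hev with ⟨c, hc⟩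
      exact ⟨c + 1, by omega⟩

lemma even_card_of_invol {α : Type*} [DecidableEq α] (s : Finset α) (f : α → α)
    (hmem : ∀ a ∈ s, f a ∈ s) (hinv : ∀ a ∈ s, f (f a) = a) (hne : ∀ a ∈ s, f a ≠ a) :
    Even s.card :=
  even_card_of_invol_aux s.card s le_rfl f hmem hinv hne

open scoped Classical in
noncomputable def lemAset {N : ℕ} (L : Fin (N+1) → ℕ) : Finset (Fin (N+1)) :=
  Finset.univ.filter (fun k => ∀ v < N, ∃ j ≠ k, L j = v)

lemma mem_lemAset {N : ℕ} {L : Fin (N+1) → ℕ} {k : Fin (N+1)} :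
    k ∈ lemAset L ↔ ∀ v < N, ∃ j ≠ k, L j = v := by
  classical
  simp [lemAset]

lemma lemAset_card_CL {N : ℕ} (L : Fin (N+1) → ℕ) (hL : ∀ j, L j ≤ N)
    (hCL : ∀ v < N + 1, ∃ j, L j = v) : (lemAset L).card = 1 := by
  set L' : Fin (N+1) → Fin (N+1) := fun j => ⟨L j, lt_of_le_of_lt (hL j) (Nat.lt_succ_self N)⟩
    with hL'
  have hsurj : Surjective L' := by
    intro v
    obtain ⟨j, hj⟩ := hCL v v.isLt
    exact ⟨j, Fin.ext hj⟩
  have hinj : Injective L' := Finite.injective_iff_surjective.mpr hsurj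
  obtain ⟨k₀, hk₀⟩ := hsurj (Fin.last N)
  have hk₀' : L k₀ = N := congrArg Fin.val hk₀
  rw [Finset.card_eq_one]
  refine ⟨k₀, ?_⟩
  ext k
  rw [mem_lemAset, Finset.mem_singleton]
  constructor
  · intro h
    by_contra hne
    have h2 : L k ≠ N := by
      intro h'
      exact hne (hinj (Fin.ext (h'.trans hk₀'.symm)))
    obtain ⟨j, hj, hjv⟩ := h (L k) (lt_of_le_of_ne (hL k) h2)
    exact hj (hinj (Fin.ext hjv))
  · rintro rfl
    intro v hv
    obtain ⟨j, hj⟩ := hCL v (lt_trans hv (Nat.lt_succ_self N))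
    refine ⟨j, ?_, hj⟩
    rintro rfl
    omega

lemma lemAset_even {N : ℕ} (L : Fin (N+1) → ℕ) (hL : ∀ j, L j ≤ N)
    (hCL : ¬ ∀ v < N + 1, ∃ j, L j = v) : Even (lemAset L).card := by
  push_neg at hCL
  obtain ⟨v₀, hv₀, hmiss⟩ := hCL
  rcases Nat.lt_or_ge v₀ N with hlt | hge
  · have : lemAset L = ∅ := by
      apply Finset.eq_empty_of_forall_notMem
      intro k hk
      obtain ⟨j, _, hj⟩ := mem_lemAset.mp hk v₀ hlt
      exact hmiss j hj
    simp [this]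
  · have hv0N : v₀ = N := by omega
    have hmissN : ∀ j, L j ≠ N := fun j => hv0N ▸ hmiss j
    have hLlt : ∀ j, L j < N := fun j => lt_of_le_of_ne (hL j) (hmissN j)
    rcases (lemAset L).eq_empty_or_nonempty with he | ⟨k₁, hk₁⟩
    · simp [he]
    · have key : ∀ k, k ∈ lemAset L → ∀ ⦃a⦄, a ≠ k → ∀ ⦃b⦄, b ≠ k → L a = L b → a = b := by
        intro k hk a hak b hbk hab
        have hmemk := mem_lemAset.mp hk
        have := Finset.inj_on_of_surj_on_of_card_le
          (s := Finset.univ.erase k) (t := Finset.range N)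
          (fun j _ => L j) (fun j _ => Finset.mem_range.mpr (hLlt j))
          (fun v hv => by
            obtain ⟨j, hjk, hj⟩ := hmemk v (Finset.mem_range.mp hv)
            exact ⟨j, Finset.mem_erase.mpr ⟨hjk, Finset.mem_univ j⟩, hj⟩)
          (by
            rw [Finset.card_erase_of_mem (Finset.mem_univ k), Finset.card_range]
            simp)
        exact this (Finset.mem_erase.mpr ⟨hak, Finset.mem_univ a⟩)
          (Finset.mem_erase.mpr ⟨hbk, Finset.mem_univ b⟩) hab
      obtain ⟨k₂, hk₂ne, hk₂val⟩ := mem_lemAset.mp hk₁ (L k₁) (hLlt k₁)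
      have hk₂mem : k₂ ∈ lemAset L := by
        rw [mem_lemAset]
        intro v hv
        obtain ⟨j, hjk, hj⟩ := mem_lemAset.mp hk₁ v hv
        rcases eq_or_ne j k₂ with rfl | hjk₂
        · exact ⟨k₁, Ne.symm hk₂ne, by rw [← hj, hk₂val]⟩
        · exact ⟨j, hjk₂, hj⟩
      have hset : lemAset L = {k₁, k₂} := by
        ext k
        simp only [Finset.mem_insert, Finset.mem_singleton]
        constructor
        · intro hk
          by_contra hknot
          push_neg at hknot
          exact hk₂ne (key k hk (Ne.symm hknot.2) (Ne.symm hknot.1) hk₂val)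
        · rintro (rfl | rfl)
          · exact hk₁
          · exact hk₂mem
      rw [hset, Finset.card_insert_of_notMem (by simpa using Ne.symm hk₂ne),
        Finset.card_singleton]
      exact ⟨1, rfl⟩

section Sperner
variable {n : ℕ} {m : Fin n → ℕ}

/-- vertex `j` of the Kuhn simplex `s = (x, π)`. -/
def vtx (s : (∀ i, Fin (m i)) × Equiv.Perm (Fin n)) (j : Fin (n+1)) : Fin n → ℕ :=
  fun i => (s.1 i : ℕ) + if ((s.2.symm i : ℕ) < (j : ℕ)) then 1 else 0

def CLpred (ℓ : (Fin n → ℕ) → ℕ) (s : (∀ i, Fin (m i)) × Equiv.Perm (Fin n)) : Prop :=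
  ∀ v < n + 1, ∃ j : Fin (n+1), ℓ (vtx s j) = v

def Dpred (ℓ : (Fin n → ℕ) → ℕ) (s : (∀ i, Fin (m i)) × Equiv.Perm (Fin n))
    (k : Fin (n+1)) : Prop :=
  ∀ v < n, ∃ j ≠ k, ℓ (vtx s j) = v

open scoped Classical in
noncomputable def CLs (m : Fin n → ℕ) (ℓ : (Fin n → ℕ) → ℕ) :
    Finset ((∀ i, Fin (m i)) × Equiv.Perm (Fin n)) :=
  Finset.univ.filter (CLpred ℓ)

open scoped Classical in
noncomputable def Eset (m : Fin n → ℕ) (ℓ : (Fin n → ℕ) → ℕ) :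
    Finset (((∀ i, Fin (m i)) × Equiv.Perm (Fin n)) × Fin (n+1)) :=
  Finset.univ.filter (fun e => Dpred ℓ e.1 e.2)

lemma vtx_le (s : (∀ i, Fin (m i)) × Equiv.Perm (Fin n)) (j : Fin (n+1)) (i : Fin n) :
    vtx s j i ≤ m i := by
  have := (s.1 i).isLt
  unfold vtx
  split_ifs <;> omega

lemma step1 (ℓ : (Fin n → ℕ) → ℕ) (H0 : ∀ p : Fin n → ℕ, (∀ i, p i ≤ m i) → ℓ p ≤ n) :
    (Eset m ℓ).card % 2 = (CLs m ℓ).card % 2 := by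
  classical
  have hsum : ∀ s : (∀ i, Fin (m i)) × Equiv.Perm (Fin n),
      (∑ k : Fin (n+1), if Dpred ℓ s k then 1 else 0) =
      (lemAset (fun j => ℓ (vtx s j))).card := by
    intro s
    rw [lemAset, Finset.card_filter]
    refine Finset.sum_congr rfl (fun k _ => ?_)
    split_ifs with h1 h2
    · rfl
    · exact absurd h1 h2
    · next h2 => exact absurd h2 h1
    · rfl
  have hfib : ∀ s : (∀ i, Fin (m i)) × Equiv.Perm (Fin n),
      (lemAset (fun j => ℓ (vtx s j))).card % 2 = if CLpred ℓ s then 1 else 0 := by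
    intro s
    have hL : ∀ j, ℓ (vtx s j) ≤ n := fun j => H0 _ (vtx_le s j)
    by_cases h : CLpred ℓ s
    · rw [lemAset_card_CL _ hL h, if_pos h]
    · rw [if_neg h]
      obtain ⟨c, hc⟩ := lemAset_even _ hL h
      omega
  rw [Eset, Finset.card_filter, Fintype.sum_prod_type, Finset.sum_nat_mod]
  have : ∀ s : (∀ i, Fin (m i)) × Equiv.Perm (Fin n),
      (∑ k : Fin (n+1), if Dpred ℓ s k then 1 else 0) % 2 = if CLpred ℓ s then 1 else 0 := by
    intro s; rw [hsum s, hfib s]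
  rw [Finset.sum_congr rfl (fun s _ => this s)]
  rw [CLs, Finset.card_filter]

end Sperner

lemma sperner_zero (m : Fin 0 → ℕ) (ℓ : (Fin 0 → ℕ) → ℕ)
    (H0 : ∀ p : Fin 0 → ℕ, (∀ i, p i ≤ m i) → ℓ p ≤ 0) : Odd (CLs m ℓ).card := by
  classical
  have hCL : ∀ s : (∀ i : Fin 0, Fin (m i)) × Equiv.Perm (Fin 0), CLpred ℓ s := by
    intro s v hv
    have hv0 : v = 0 := by omega
    subst hv0
    exact ⟨0, Nat.le_zero.mp (H0 _ (fun i => i.elim0))⟩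
  have huniv : CLs m ℓ = Finset.univ := by
    rw [CLs]
    exact Finset.filter_true_of_mem (fun s _ => hCL s)
  rw [huniv, Finset.card_univ, Fintype.card_prod, Fintype.card_perm]
  simp

section Invol
variable {N : ℕ} {m : Fin (N+1) → ℕ}

def cyc {N : ℕ} : Equiv.Perm (Fin (N+1)) := Equiv.addRight 1

def flipX (x : ∀ i, Fin (m i)) (b : Fin (N+1)) : ∀ i, Fin (m i) :=
  fun i => if h : i = b ∧ (x i : ℕ) + 1 < m i then ⟨(x i : ℕ) + 1, h.2⟩ else x i

def downX (x : ∀ i, Fin (m i)) (b : Fin (N+1)) : ∀ i, Fin (m i) :=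
  fun i => if i = b then ⟨(x i : ℕ) - 1, lt_of_le_of_lt (Nat.sub_le _ _) (x i).isLt⟩ else x i

def pos1 {N : ℕ} (k : Fin (N+2)) : Fin (N+1) := ⟨(k : ℕ) - 1, by have := k.isLt; omega⟩
def pos2 {N : ℕ} (k : Fin (N+2)) : Fin (N+1) := ⟨min (k : ℕ) N, by have := k.isLt; omega⟩

def sigmaMap (e : ((∀ i, Fin (m i)) × Equiv.Perm (Fin (N+1))) × Fin (N+2)) :
    ((∀ i, Fin (m i)) × Equiv.Perm (Fin (N+1))) × Fin (N+2) :=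
  if e.2 = 0 then
    ((flipX e.1.1 (e.1.2 0), cyc.trans e.1.2), Fin.last (N+1))
  else if e.2 = Fin.last (N+1) then
    ((downX e.1.1 (e.1.2 (Fin.last N)), cyc.symm.trans e.1.2), 0)
  else
    ((e.1.1, (Equiv.swap (pos1 e.2) (pos2 e.2)).trans e.1.2), e.2)

def Bpred (e : ((∀ i, Fin (m i)) × Equiv.Perm (Fin (N+1))) × Fin (N+2)) : Prop :=
  (e.2 = 0 ∧ (e.1.1 (e.1.2 0) : ℕ) + 1 = m (e.1.2 0)) ∨
  (e.2 = Fin.last (N+1) ∧ (e.1.1 (e.1.2 (Fin.last N)) : ℕ) = 0)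

lemma cyc_apply (j : Fin (N+1)) : cyc j = j + 1 := rfl

lemma cyc_symm_apply (j : Fin (N+1)) : cyc.symm j = j - 1 := by
  simp only [cyc, Equiv.addRight_symm, Equiv.coe_addRight, sub_eq_add_neg]

lemma val_sub_one (r : Fin (N+1)) :
    ((r - 1 : Fin (N+1)) : ℕ) = if (r : ℕ) = 0 then N else (r : ℕ) - 1 := by
  rw [Fin.coe_sub_one]
  congr 1
  simp only [Fin.ext_iff, Fin.val_zero]

lemma last_ne_zero' : (Fin.last (N+1)) ≠ (0 : Fin (N+2)) := by
  simp [Fin.ext_iff]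

/-- the middle-pivot vertex identity -/
lemma vtx_middle (x : ∀ i, Fin (m i)) (π : Equiv.Perm (Fin (N+1))) (k : Fin (N+2))
    (hk0 : k ≠ 0) (hkl : k ≠ Fin.last (N+1)) (j : Fin (N+2)) (hj : j ≠ k) :
    vtx (x, (Equiv.swap (pos1 k) (pos2 k)).trans π) j = vtx (x, π) j := by
  funext i
  have hkv : (k : ℕ) ≠ 0 := fun h => hk0 (Fin.ext h)
  have hkN : (k : ℕ) < N + 1 := by
    have h1 := k.isLt
    have : (k : ℕ) ≠ N + 1 := fun h => hkl (Fin.ext (by simp [h]))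
    omega
  have hjk : (j : ℕ) ≠ (k : ℕ) := fun h => hj (Fin.ext h)
  have hp1 : (pos1 k : ℕ) = (k : ℕ) - 1 := rfl
  have hp2 : (pos2 k : ℕ) = (k : ℕ) := by simp [pos2]; omega
  show (x i : ℕ) + _ = (x i : ℕ) + _
  have key : ((Equiv.swap (pos1 k) (pos2 k) (π.symm i) : Fin (N+1)) : ℕ) < (j : ℕ) ↔
      ((π.symm i : ℕ) < (j : ℕ)) := by
    rcases eq_or_ne (π.symm i) (pos1 k) with h | h1
    · rw [h, Equiv.swap_apply_left, hp2, hp1]; omega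
    rcases eq_or_ne (π.symm i) (pos2 k) with h | h2
    · rw [h, Equiv.swap_apply_right, hp1, hp2]; omega
    · rw [Equiv.swap_apply_of_ne_of_ne h1 h2]
  simp only [Equiv.symm_trans_apply, Equiv.symm_swap, key]

/-- the first-vertex pivot identity -/
lemma vtx_zero (x : ∀ i, Fin (m i)) (π : Equiv.Perm (Fin (N+1)))
    (hb : (x (π 0) : ℕ) + 1 < m (π 0)) (j : Fin (N+2)) (hj : j ≠ Fin.last (N+1)) :
    vtx (flipX x (π 0), cyc.trans π) j = vtx (x, π) (j + 1) := by
  funext i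
  have hj1 : ((j + 1 : Fin (N+2)) : ℕ) = (j : ℕ) + 1 := by
    rw [Fin.val_add_one, if_neg hj]
  have hjN : (j : ℕ) < N + 1 := by
    have h1 := j.isLt
    have : (j : ℕ) ≠ N + 1 := fun h => hj (Fin.ext (by simp [h]))
    omega
  unfold vtx
  simp only [Equiv.symm_trans_apply]
  by_cases hi : i = π 0
  · have hsy : π.symm i = 0 := by rw [hi, Equiv.symm_apply_apply]
    have hfl : (flipX x (π 0) i : ℕ) = (x i : ℕ) + 1 := by
      rw [flipX, dif_pos ⟨hi, hi ▸ hb⟩]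
    simp only [hsy, cyc_symm_apply, val_sub_one, Fin.val_zero, if_pos rfl, hfl, hj1]
    split_ifs <;> omega
  · have hsy : π.symm i ≠ 0 := fun h => hi (by rw [← Equiv.apply_symm_apply π i, h])
    have hsyv : (π.symm i : ℕ) ≠ 0 := fun h => hsy (Fin.ext h)
    have hfl : (flipX x (π 0) i : ℕ) = (x i : ℕ) := by
      rw [flipX, dif_neg (fun h => hi h.1)]
    simp only [cyc_symm_apply, val_sub_one, if_neg hsyv, hfl, hj1]
    have := (π.symm i).isLt
    split_ifs <;> omega

/-- the last-vertex pivot identity -/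
lemma vtx_last (x : ∀ i, Fin (m i)) (π : Equiv.Perm (Fin (N+1)))
    (hb : (x (π (Fin.last N)) : ℕ) ≠ 0) (j : Fin (N+2)) (hj : j ≠ 0) :
    vtx (downX x (π (Fin.last N)), cyc.symm.trans π) j = vtx (x, π) (j - 1) := by
  funext i
  have hjv : (j : ℕ) ≠ 0 := fun h => hj (Fin.ext h)
  have hj1 : ((j - 1 : Fin (N+2)) : ℕ) = (j : ℕ) - 1 := by
    rw [Fin.coe_sub_one, if_neg hj]
  unfold vtx
  simp only [Equiv.symm_trans_apply, Equiv.symm_symm]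
  by_cases hi : i = π (Fin.last N)
  · have hsy : π.symm i = Fin.last N := by rw [hi, Equiv.symm_apply_apply]
    have hlast1 : ((Fin.last N + 1 : Fin (N+1)) : ℕ) = 0 := by
      rw [Fin.last_add_one]; rfl
    have hdn : (downX x (π (Fin.last N)) i : ℕ) = (x i : ℕ) - 1 := by
      rw [downX, if_pos hi]
    have hxb : (x i : ℕ) ≠ 0 := hi ▸ hb
    have hjN : (j : ℕ) < N + 2 := j.isLt
    simp only [hsy, cyc_apply, hlast1, hdn, hj1, Fin.val_last]
    split_ifs <;> omega
  · have hsy : π.symm i ≠ Fin.last N := fun h => hi (by rw [← Equiv.apply_symm_apply π i, h])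
    have hsyv : (π.symm i : ℕ) < N := by
      have h1 := (π.symm i).isLt
      have : (π.symm i : ℕ) ≠ N := fun h => hsy (Fin.ext h)
      omega
    have hadd : ((π.symm i + 1 : Fin (N+1)) : ℕ) = (π.symm i : ℕ) + 1 := by
      rw [Fin.val_add_one, if_neg (fun h => hsy h)]
    have hdn : (downX x (π (Fin.last N)) i : ℕ) = (x i : ℕ) := by
      rw [downX, if_neg hi]
    simp only [cyc_apply, hadd, hdn, hj1]
    split_ifs <;> omega

end Invol

lemma mem_Eset {n : ℕ} {m : Fin n → ℕ} {ℓ : (Fin n → ℕ) → ℕ}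
    {e : ((∀ i, Fin (m i)) × Equiv.Perm (Fin n)) × Fin (n+1)} :
    e ∈ Eset m ℓ ↔ Dpred ℓ e.1 e.2 := by
  classical
  simp [Eset]

section Invol2
variable {N : ℕ} {m : Fin (N+1) → ℕ} (ℓ : (Fin (N+1) → ℕ) → ℕ)

lemma neg_one_eq_last {M : ℕ} : (-1 : Fin (M+1)) = Fin.last M :=
  neg_eq_of_add_eq_zero_left (Fin.last_add_one M)

lemma downX_val_eq (x : ∀ i, Fin (m i)) (b : Fin (N+1)) :
    (downX x b b : ℕ) = (x b : ℕ) - 1 := by rw [downX, if_pos rfl]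

lemma downX_val_ne (x : ∀ i, Fin (m i)) (b i : Fin (N+1)) (h : i ≠ b) :
    (downX x b i : ℕ) = x i := by rw [downX, if_neg h]

lemma flipX_val_eq (x : ∀ i, Fin (m i)) (b : Fin (N+1)) (h : (x b : ℕ) + 1 < m b) :
    (flipX x b b : ℕ) = (x b : ℕ) + 1 := by rw [flipX, dif_pos ⟨rfl, h⟩]

lemma flipX_val_ne (x : ∀ i, Fin (m i)) (b i : Fin (N+1)) (h : i ≠ b) :
    (flipX x b i : ℕ) = x i := by rw [flipX, dif_neg (fun hh => h hh.1)]

lemma sigma_good (e : ((∀ i, Fin (m i)) × Equiv.Perm (Fin (N+1))) × Fin (N+2))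
    (he : Dpred ℓ e.1 e.2) (hnb : ¬ Bpred e) :
    Dpred ℓ (sigmaMap e).1 (sigmaMap e).2 ∧ ¬ Bpred (sigmaMap e) ∧
      sigmaMap (sigmaMap e) = e ∧ sigmaMap e ≠ e := by
  obtain ⟨⟨x, π⟩, k⟩ := e
  by_cases hk0 : k = 0
  · subst hk0
    have hb : (x (π 0) : ℕ) + 1 < m (π 0) := by
      have h1 := (x (π 0)).isLt
      have h2 : (x (π 0) : ℕ) + 1 ≠ m (π 0) := fun h => hnb (Or.inl ⟨rfl, h⟩)
      omega
    have hσ : sigmaMap ((x, π), (0 : Fin (N+2))) =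
        ((flipX x (π 0), cyc.trans π), Fin.last (N+1)) := by
      rw [sigmaMap, if_pos rfl]
    have hπ' : (cyc.trans π) (Fin.last N) = π 0 := by
      simp [Equiv.trans_apply, cyc_apply, Fin.last_add_one]
    have hx'b : ((flipX x (π 0)) (π 0) : ℕ) = (x (π 0) : ℕ) + 1 := by
      rw [flipX, dif_pos ⟨rfl, hb⟩]
    refine ⟨?_, ?_, ?_, ?_⟩
    · rw [hσ]
      intro v hv
      obtain ⟨j, hj0, hjv⟩ := he v hv
      have hja : j - 1 ≠ Fin.last (N+1) := by
        intro h
        apply hj0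
        have : j = Fin.last (N+1) + 1 := by rwa [sub_eq_iff_eq_add] at h
        rw [this, Fin.last_add_one]
      refine ⟨j - 1, hja, ?_⟩
      rw [vtx_zero x π hb (j - 1) hja, sub_add_cancel]
      exact hjv
    · rw [hσ]
      rintro (⟨h0, -⟩ | ⟨-, hx0⟩)
      · exact last_ne_zero' h0
      · rw [hπ', hx'b] at hx0
        omega
    · rw [hσ, sigmaMap, if_neg last_ne_zero', if_pos rfl]
      have hxx : downX (flipX x (π 0)) ((cyc.trans π) (Fin.last N)) = x := by
        rw [hπ']
        funext i
        apply Fin.ext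
        by_cases hi : i = π 0
        · subst hi
          rw [downX_val_eq, flipX_val_eq x _ hb]
          omega
        · rw [downX_val_ne _ _ _ hi, flipX_val_ne _ _ _ hi]
      have hππ : cyc.symm.trans (cyc.trans π) = π := by
        apply Equiv.ext
        intro r
        simp [Equiv.trans_apply, cyc_apply, cyc_symm_apply, sub_add_cancel]
      rw [hxx, hππ]
    · intro h
      exact last_ne_zero' (congrArg Prod.snd (hσ ▸ h))
  · by_cases hkl : k = Fin.last (N+1)
    · subst hkl
      have hb : (x (π (Fin.last N)) : ℕ) ≠ 0 := fun h => hnb (Or.inr ⟨rfl, h⟩)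
      have hσ : sigmaMap ((x, π), Fin.last (N+1)) =
          ((downX x (π (Fin.last N)), cyc.symm.trans π), 0) := by
        rw [sigmaMap, if_neg last_ne_zero', if_pos rfl]
      have hπ' : (cyc.symm.trans π) 0 = π (Fin.last N) := by
        simp [Equiv.trans_apply, cyc_symm_apply, zero_sub, neg_one_eq_last]
      have hx'b : ((downX x (π (Fin.last N))) (π (Fin.last N)) : ℕ) =
          (x (π (Fin.last N)) : ℕ) - 1 := by
        rw [downX, if_pos rfl]
      refine ⟨?_, ?_, ?_, ?_⟩
      · rw [hσ]
        intro v hv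
        obtain ⟨j, hjl, hjv⟩ := he v hv
        have hja : j + 1 ≠ (0 : Fin (N+2)) := by
          intro h
          apply hjl
          have : j = -1 := eq_neg_of_add_eq_zero_left h
          rw [this, neg_one_eq_last]
        refine ⟨j + 1, hja, ?_⟩
        rw [vtx_last x π hb (j + 1) hja, add_sub_cancel_right]
        exact hjv
      · rw [hσ]
        rintro (⟨-, hxm⟩ | ⟨h0, -⟩)
        · rw [hπ', hx'b] at hxm
          have := (x (π (Fin.last N))).isLt
          omega
        · exact last_ne_zero' h0.symm
      · rw [hσ, sigmaMap, if_pos rfl]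
        have hxx : flipX (downX x (π (Fin.last N))) ((cyc.symm.trans π) 0) = x := by
          rw [hπ']
          funext i
          apply Fin.ext
          by_cases hi : i = π (Fin.last N)
          · subst hi
            have hcond : (downX x (π (Fin.last N)) (π (Fin.last N)) : ℕ) + 1 < m (π (Fin.last N)) := by
              rw [downX_val_eq]
              have := (x (π (Fin.last N))).isLt
              omega
            rw [flipX_val_eq _ _ hcond, downX_val_eq]
            omega
          · rw [flipX_val_ne _ _ _ hi, downX_val_ne _ _ _ hi]
        have hππ : cyc.trans (cyc.symm.trans π) = π := by
          apply Equiv.ext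
          intro r
          simp [Equiv.trans_apply, cyc_apply, cyc_symm_apply, add_sub_cancel_right]
        rw [hxx, hππ]
      · intro h
        exact last_ne_zero' (congrArg Prod.snd (hσ ▸ h)).symm
    · have hσ : sigmaMap ((x, π), k) =
          ((x, (Equiv.swap (pos1 k) (pos2 k)).trans π), k) := by
        rw [sigmaMap, if_neg hk0, if_neg hkl]
      have hkv : (k : ℕ) ≠ 0 := fun h => hk0 (Fin.ext h)
      have hkN : (k : ℕ) < N + 1 := by
        have h1 := k.isLt
        have : (k : ℕ) ≠ N + 1 := fun h => hkl (Fin.ext (by simp [h]))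
        omega
      refine ⟨?_, ?_, ?_, ?_⟩
      · rw [hσ]
        intro v hv
        obtain ⟨j, hjk, hjv⟩ := he v hv
        refine ⟨j, hjk, ?_⟩
        rw [vtx_middle x π k hk0 hkl j hjk]
        exact hjv
      · rw [hσ]
        rintro (⟨h0, -⟩ | ⟨hl, -⟩)
        · exact hk0 h0
        · exact hkl hl
      · rw [hσ, sigmaMap, if_neg hk0, if_neg hkl]
        have hππ : (Equiv.swap (pos1 k) (pos2 k)).trans
            ((Equiv.swap (pos1 k) (pos2 k)).trans π) = π := by
          apply Equiv.ext
          intro r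
          simp [Equiv.trans_apply, Equiv.swap_apply_self]
        rw [hππ]
      · intro h
        have hperm : (Equiv.swap (pos1 k) (pos2 k)).trans π = π :=
          congrArg (fun z => z.1.2) (hσ ▸ h)
        have : Equiv.swap (pos1 k) (pos2 k) (pos1 k) = pos1 k := by
          have := congrArg (fun (σ : Equiv.Perm (Fin (N+1))) => σ (pos1 k)) hperm
          simp only [Equiv.trans_apply] at this
          exact π.injective this
        rw [Equiv.swap_apply_left] at this
        have hv := congrArg Fin.val this
        simp only [pos1, pos2] at hv
        omega

open scoped Classical in
lemma Eint_even : Even (((Eset m ℓ).filter (fun e => ¬ Bpred e)).card) := by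
  classical
  apply even_card_of_invol _ sigmaMap
  · intro e he
    rw [Finset.mem_filter, mem_Eset] at he ⊢
    obtain ⟨h1, h2, -, -⟩ := sigma_good ℓ e he.1 he.2
    exact ⟨h1, h2⟩
  · intro e he
    rw [Finset.mem_filter, mem_Eset] at he
    exact (sigma_good ℓ e he.1 he.2).2.2.1
  · intro e he
    rw [Finset.mem_filter, mem_Eset] at he
    exact (sigma_good ℓ e he.1 he.2).2.2.2

lemma Ebd_char
    (H1 : ∀ p : Fin (N+1) → ℕ, (∀ i, p i ≤ m i) → ∀ i : Fin (N+1), p i = 0 → ℓ p ≠ (i : ℕ))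
    (H2 : ∀ p : Fin (N+1) → ℕ, (∀ i, p i ≤ m i) → ∀ i : Fin (N+1), p i = m i → ℓ p ≤ (i : ℕ))
    (e : ((∀ i, Fin (m i)) × Equiv.Perm (Fin (N+1))) × Fin (N+2)) (he : e ∈ Eset m ℓ) :
    Bpred e ↔ (e.2 = 0 ∧ e.1.2 0 = Fin.last N ∧
      (e.1.1 (Fin.last N) : ℕ) + 1 = m (Fin.last N)) := by
  obtain ⟨⟨x, π⟩, k⟩ := e
  rw [mem_Eset] at he
  constructor
  · rintro (⟨hk0, hxm⟩ | ⟨hkl, hx0⟩)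
    · -- top face: show π 0 = last
      subst hk0
      dsimp only at hxm
      obtain ⟨j, hj0, hjv⟩ := he N (by omega)
      have hjne : (j : ℕ) ≠ 0 := fun h => hj0 (Fin.ext h)
      have hcoord : vtx (x, π) j (π 0) = m (π 0) := by
        unfold vtx
        simp only [Equiv.symm_apply_apply, Fin.val_zero]
        rw [if_pos (by omega)]
        omega
      have hle := H2 (vtx (x, π) j) (vtx_le _ j) (π 0) hcoord
      rw [hjv] at hle
      have hπ0 : π 0 = Fin.last N := by
        apply Fin.ext
        have := (π 0).isLt
        simp only [Fin.val_last]
        omega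
      exact ⟨rfl, hπ0, by rw [← hπ0]; exact hxm⟩
    · -- bottom face: impossible
      exfalso
      subst hkl
      dsimp only at hx0
      obtain ⟨j, hjl, hjv⟩ := he (π (Fin.last N) : ℕ) (π (Fin.last N)).isLt
      have hjne : (j : ℕ) < N + 1 := by
        have h1 := j.isLt
        have : (j : ℕ) ≠ N + 1 := fun h => hjl (Fin.ext (by simp [h]))
        omega
      have hcoord : vtx (x, π) j (π (Fin.last N)) = 0 := by
        unfold vtx
        simp only [Equiv.symm_apply_apply, Fin.val_last]
        rw [if_neg (by omega)]
        omega
      exact H1 (vtx (x, π) j) (vtx_le _ j) (π (Fin.last N)) hcoord hjv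
  · rintro ⟨hk0, hπ0, hxm⟩
    exact Or.inl ⟨hk0, by rw [hπ0]; exact hxm⟩

end Invol2

section Reduce
variable {N : ℕ} {m : Fin (N+1) → ℕ}

def bigPerm (π' : Equiv.Perm (Fin N)) : Equiv.Perm (Fin (N+1)) where
  toFun := Fin.cases (Fin.last N) (fun j => (π' j).castSucc)
  invFun := Fin.lastCases 0 (fun i' => (π'.symm i').succ)
  left_inv := by
    intro j
    cases j using Fin.cases <;> simp
  right_inv := by
    intro i
    cases i using Fin.lastCases <;> simp

lemma bigPerm_zero (π' : Equiv.Perm (Fin N)) : bigPerm π' 0 = Fin.last N := by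
  simp [bigPerm]

lemma bigPerm_succ (π' : Equiv.Perm (Fin N)) (j : Fin N) :
    bigPerm π' j.succ = (π' j).castSucc := by
  simp [bigPerm]

lemma bigPerm_symm_last (π' : Equiv.Perm (Fin N)) :
    (bigPerm π').symm (Fin.last N) = 0 := by
  simp [bigPerm]

lemma bigPerm_symm_castSucc (π' : Equiv.Perm (Fin N)) (i' : Fin N) :
    (bigPerm π').symm i'.castSucc = (π'.symm i').succ := by
  simp [bigPerm]

def bigX (hm : 0 < m (Fin.last N)) (x' : ∀ i' : Fin N, Fin (m i'.castSucc)) :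
    ∀ i, Fin (m i) :=
  Fin.lastCases (⟨m (Fin.last N) - 1, by omega⟩) x'

lemma bigX_last (hm : 0 < m (Fin.last N)) (x' : ∀ i' : Fin N, Fin (m i'.castSucc)) :
    (bigX hm x' (Fin.last N) : ℕ) = m (Fin.last N) - 1 := by
  rw [bigX, Fin.lastCases_last]

lemma bigX_castSucc (hm : 0 < m (Fin.last N)) (x' : ∀ i' : Fin N, Fin (m i'.castSucc))
    (i' : Fin N) : bigX hm x' i'.castSucc = x' i' := by
  rw [bigX, Fin.lastCases_castSucc]

lemma vtx_snoc (hm : 0 < m (Fin.last N)) (x' : ∀ i' : Fin N, Fin (m i'.castSucc))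
    (π' : Equiv.Perm (Fin N)) (j : Fin (N+1)) :
    vtx (m := m) (bigX hm x', bigPerm π') j.succ =
      Fin.snoc (vtx (m := fun i' => m i'.castSucc) (x', π') j) (m (Fin.last N)) := by
  funext i
  cases i using Fin.lastCases with
  | last =>
    rw [Fin.snoc_last]
    show (bigX hm x' (Fin.last N) : ℕ) + _ = _
    rw [bigX_last hm x', bigPerm_symm_last]
    split_ifs with h <;> simp only [Fin.val_zero, Fin.val_succ] at h ⊢ <;> omega
  | cast i' =>
    rw [Fin.snoc_castSucc]
    show (bigX hm x' i'.castSucc : ℕ) + _ = (x' i' : ℕ) + _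
    rw [bigX_castSucc hm x', bigPerm_symm_castSucc]
    simp only [Fin.val_succ, Nat.add_lt_add_iff_right]
  
def smallPerm (π : Equiv.Perm (Fin (N+1))) (hπ : π 0 = Fin.last N) : Equiv.Perm (Fin N) where
  toFun j := (π j.succ).castPred (by
    intro h
    exact (Fin.succ_ne_zero j) (π.injective (h.trans hπ.symm)))
  invFun i' := (π.symm i'.castSucc).pred (by
    intro h
    have h2 : i'.castSucc = π 0 := by rw [← h, Equiv.apply_symm_apply]
    rw [hπ] at h2
    exact absurd h2 (Fin.castSucc_lt_last i').ne)
  left_inv := fun j => by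
    simp only [Fin.castSucc_castPred, Equiv.symm_apply_apply, Fin.pred_succ]
  right_inv := fun i' => by
    simp only [Fin.succ_pred, Equiv.apply_symm_apply, Fin.castPred_castSucc]

lemma bigPerm_smallPerm (π : Equiv.Perm (Fin (N+1))) (hπ : π 0 = Fin.last N) :
    bigPerm (smallPerm π hπ) = π := by
  apply Equiv.ext
  intro j
  cases j using Fin.cases with
  | zero => rw [bigPerm_zero, hπ]
  | succ j0 =>
    rw [bigPerm_succ]
    have hval : (smallPerm π hπ j0 : ℕ) = (π j0.succ : ℕ) := rfl
    apply Fin.ext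
    rw [Fin.coe_castSucc, hval]

lemma D_iff_CL (ℓ : (Fin (N+1) → ℕ) → ℕ) (hm : 0 < m (Fin.last N))
    (x' : ∀ i' : Fin N, Fin (m i'.castSucc)) (π' : Equiv.Perm (Fin N)) :
    Dpred ℓ (bigX hm x', bigPerm π') 0 ↔
      CLpred (fun p => ℓ (Fin.snoc p (m (Fin.last N)))) (x', π') := by
  constructor
  · intro h v hv
    obtain ⟨j, hj0, hjv⟩ := h v hv
    obtain ⟨j0, rfl⟩ := Fin.exists_succ_eq.mpr hj0
    refine ⟨j0, ?_⟩
    show ℓ (Fin.snoc (vtx (x', π') j0) (m (Fin.last N))) = v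
    rw [← vtx_snoc hm x' π' j0]
    exact hjv
  · intro h v hv
    obtain ⟨j0, hj⟩ := h v hv
    exact ⟨j0.succ, Fin.succ_ne_zero j0, by rw [vtx_snoc hm x' π' j0]; exact hj⟩

open scoped Classical in
lemma Ebd_card (ℓ : (Fin (N+1) → ℕ) → ℕ) (hm : 0 < m (Fin.last N))
    (H1 : ∀ p : Fin (N+1) → ℕ, (∀ i, p i ≤ m i) → ∀ i : Fin (N+1), p i = 0 → ℓ p ≠ (i : ℕ))
    (H2 : ∀ p : Fin (N+1) → ℕ, (∀ i, p i ≤ m i) → ∀ i : Fin (N+1), p i = m i → ℓ p ≤ (i : ℕ)) :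
    (CLs (fun i' : Fin N => m i'.castSucc) (fun p => ℓ (Fin.snoc p (m (Fin.last N))))).card =
      ((Eset m ℓ).filter Bpred).card := by
  apply Finset.card_nbij (i := fun s' => ((bigX hm s'.1, bigPerm s'.2), (0 : Fin (N+2))))
  · intro s' hs'
    rw [Finset.mem_coe, CLs, Finset.mem_filter] at hs'
    have hD : Dpred ℓ (bigX hm s'.1, bigPerm s'.2) 0 :=
      (D_iff_CL ℓ hm s'.1 s'.2).mpr hs'.2
    rw [Finset.mem_coe, Finset.mem_filter, mem_Eset]
    refine ⟨hD, Or.inl ⟨rfl, ?_⟩⟩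
    show (bigX hm s'.1 (bigPerm s'.2 0) : ℕ) + 1 = m (bigPerm s'.2 0)
    rw [bigPerm_zero, bigX_last]
    omega
  · intro s₁ h₁ s₂ h₂ heq
    simp only [Prod.mk.injEq] at heq
    obtain ⟨⟨hx, hπ⟩, -⟩ := heq
    have hx' : s₁.1 = s₂.1 := by
      funext i'
      have := congrFun hx i'.castSucc
      rwa [bigX_castSucc, bigX_castSucc] at this
    have hπ' : s₁.2 = s₂.2 := by
      apply Equiv.ext
      intro j
      have h5 := congrArg (fun (σ : Equiv.Perm (Fin (N+1))) => σ j.succ) hπ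
      rw [bigPerm_succ, bigPerm_succ] at h5
      exact Fin.castSucc_injective N h5
    exact Prod.ext hx' hπ'
  · rintro ⟨⟨x, π⟩, k⟩ he
    rw [Finset.mem_coe, Finset.mem_filter] at he
    obtain ⟨heE, heB⟩ := he
    obtain ⟨hk0, hπ0, hxm⟩ := (Ebd_char ℓ H1 H2 _ heE).mp heB
    dsimp only at hk0 hπ0 hxm
    subst hk0
    set x' : ∀ i' : Fin N, Fin (m i'.castSucc) := fun i' => x i'.castSucc with hx'
    have hbx : bigX hm x' = x := by
      funext i
      cases i using Fin.lastCases with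
      | last =>
        apply Fin.ext
        rw [bigX_last]
        omega
      | cast i' => rw [bigX_castSucc]
    have hbπ : bigPerm (smallPerm π hπ0) = π := bigPerm_smallPerm π hπ0
    refine ⟨(x', smallPerm π hπ0), ?_, ?_⟩
    · rw [Finset.mem_coe, CLs, Finset.mem_filter]
      refine ⟨Finset.mem_univ _, ?_⟩
      apply (D_iff_CL ℓ hm x' (smallPerm π hπ0)).mp
      rw [hbx, hbπ]
      exact mem_Eset.mp heE
    · show ((bigX hm x', bigPerm (smallPerm π hπ0)), (0 : Fin (N+2))) = ((x, π), 0)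
      rw [hbx, hbπ]
  
end Reduce

theorem sperner_main : ∀ (n : ℕ) (m : Fin n → ℕ), (∀ i, 0 < m i) →
    ∀ ℓ : (Fin n → ℕ) → ℕ,
    (∀ p : Fin n → ℕ, (∀ i, p i ≤ m i) → ℓ p ≤ n) →
    (∀ p : Fin n → ℕ, (∀ i, p i ≤ m i) → ∀ i : Fin n, p i = 0 → ℓ p ≠ (i : ℕ)) →
    (∀ p : Fin n → ℕ, (∀ i, p i ≤ m i) → ∀ i : Fin n, p i = m i → ℓ p ≤ (i : ℕ)) →
    Odd (CLs m ℓ).card := by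
  intro n
  induction n with
  | zero => intro m hm ℓ H0 H1 H2; exact sperner_zero m ℓ H0
  | succ N ih =>
    intro m hm ℓ H0 H1 H2
    classical
    have hsnoc_grid : ∀ p : Fin N → ℕ, (∀ i', p i' ≤ m i'.castSucc) →
        (∀ i, (Fin.snoc p (m (Fin.last N)) : Fin (N+1) → ℕ) i ≤ m i) := by
      intro p hp i
      cases i using Fin.lastCases with
      | last => rw [Fin.snoc_last]
      | cast i' => rw [Fin.snoc_castSucc]; exact hp i'
    have H0' : ∀ p : Fin N → ℕ, (∀ i', p i' ≤ m i'.castSucc) →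
        ℓ (Fin.snoc p (m (Fin.last N))) ≤ N := by
      intro p hp
      have h := H2 _ (hsnoc_grid p hp) (Fin.last N) (Fin.snoc_last _ _)
      simpa [Fin.val_last] using h
    have H1' : ∀ p : Fin N → ℕ, (∀ i', p i' ≤ m i'.castSucc) → ∀ i' : Fin N,
        p i' = 0 → ℓ (Fin.snoc p (m (Fin.last N))) ≠ (i' : ℕ) := by
      intro p hp i' hpi
      have h := H1 _ (hsnoc_grid p hp) i'.castSucc (by rw [Fin.snoc_castSucc]; exact hpi)
      simpa using h
    have H2' : ∀ p : Fin N → ℕ, (∀ i', p i' ≤ m i'.castSucc) → ∀ i' : Fin N,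
        p i' = m i'.castSucc → ℓ (Fin.snoc p (m (Fin.last N))) ≤ (i' : ℕ) := by
      intro p hp i' hpi
      have h := H2 _ (hsnoc_grid p hp) i'.castSucc (by rw [Fin.snoc_castSucc]; exact hpi)
      simpa using h
    have hodd' := ih (fun i' => m i'.castSucc) (fun i' => hm _)
      (fun p => ℓ (Fin.snoc p (m (Fin.last N)))) H0' H1' H2'
    have h1 := step1 ℓ H0
    have h2 := Finset.card_filter_add_card_filter_not
      (s := Eset m ℓ) (p := Bpred)
    have h3 := Eint_even (m := m) ℓ
    have h4 := Ebd_card ℓ (hm (Fin.last N)) H1 H2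
    obtain ⟨c, hc⟩ := h3
    rw [← h4] at h2
    rw [hc] at h2
    rw [Nat.odd_iff] at hodd' ⊢
    omega

lemma exists_eps_chain {X : Type*} [MetricSpace X] [ConnectedSpace X] (a b : X) {ε : ℝ}
    (hε : 0 < ε) :
    ∃ (M : ℕ) (c : ℕ → X), c 0 = a ∧ c M = b ∧ ∀ j < M, dist (c j) (c (j+1)) < ε := by
  set R : Set X := {x | ∃ (M : ℕ) (c : ℕ → X),
    c 0 = a ∧ c M = x ∧ ∀ j < M, dist (c j) (c (j+1)) < ε} with hR
  have hmem : ∀ x ∈ R, ∀ y, dist x y < ε → y ∈ R := by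
    rintro x ⟨M, c, h0, hM, hst⟩ y hd
    refine ⟨M + 1, fun j => if j ≤ M then c j else y, ?_, ?_, ?_⟩
    · simp [h0]
    · simp
    · intro j hj
      rcases Nat.lt_or_ge j M with hjM | hjM
      · have h1 : j ≤ M := hjM.le
        have h2 : j + 1 ≤ M := hjM
        simp only [if_pos h1, if_pos h2]
        exact hst j hjM
      · have hjeq : j = M := by omega
        subst hjeq
        simp only [if_pos le_rfl, if_neg (by omega : ¬ j + 1 ≤ j)]
        rw [hM]
        exact hd
  have hopen : IsOpen R := by
    rw [Metric.isOpen_iff]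
    intro x hx
    exact ⟨ε, hε, fun y hy => hmem x hx y (by rw [Metric.mem_ball, dist_comm] at hy; exact hy)⟩
  have hclosed : IsClosed R := by
    rw [← isOpen_compl_iff, Metric.isOpen_iff]
    intro x hx
    refine ⟨ε, hε, fun y hy => ?_⟩
    intro hyR
    exact hx (hmem y hyR x (by rwa [Metric.mem_ball] at hy))
  have hne : a ∈ R := ⟨0, fun _ => a, rfl, rfl, by omega⟩
  have huniv : R = univ := IsClopen.eq_univ (⟨hclosed, hopen⟩ : IsClopen R) ⟨a, hne⟩
  have : b ∈ R := by rw [huniv]; trivial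
  exact this

lemma mem_CLs {n : ℕ} {m : Fin n → ℕ} {ℓ : (Fin n → ℕ) → ℕ}
    {s : (∀ i, Fin (m i)) × Equiv.Perm (Fin n)} :
    s ∈ CLs m ℓ ↔ CLpred ℓ s := by
  classical
  simp [CLs]

end HolsztynskiAux

/-- Holsztyński: if `T₁, …, Tₙ` are metrizable continua and
`uᵢ : Tᵢ → [0,1]` are continuous surjections, then the product map
`u₁ × ⋯ × uₙ` is essential: every continuous map into the cube agreeing with it
on the preimage of the boundary is surjective. -/
theorem stmt_3 {n : ℕ} (T : Fin n → Type*)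
    [∀ i, MetricSpace (T i)] [∀ i, CompactSpace (T i)]
    [∀ i, ConnectedSpace (T i)] [∀ i, Nonempty (T i)]
    (u : ∀ i, T i → unitInterval)
    (hc : ∀ i, Continuous (u i)) (hs : ∀ i, Surjective (u i)) :
    ∀ g : (∀ i, T i) → (Fin n → unitInterval), Continuous g →
      (∀ t : ∀ i, T i, (fun i => u i (t i)) ∈ cubeBoundary n → g t = fun i => u i (t i)) →
      Surjective g := by
  classical
  intro g hg hbd y
  by_cases hy : y ∈ cubeBoundary n
  · choose t ht using fun i => hs i (y i)
    refine ⟨t, ?_⟩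
    have huvec : (fun i => u i (t i)) = y := funext ht
    rw [hbd t (by rw [huvec]; exact hy), huvec]
  · -- y has no coordinate equal to 0 or 1
    simp only [cubeBoundary, Set.mem_setOf_eq, not_exists, not_or] at hy
    have hy1 : ∀ i, (y i : ℝ) < 1 := by
      intro i
      refine lt_of_le_of_ne (unitInterval.le_one (y i)) ?_
      intro h
      exact (hy i).2 (Subtype.ext h)
    have hy0 : ∀ i, (0 : ℝ) ≤ (y i : ℝ) := fun i => unitInterval.nonneg (y i)
    -- reduce to approximation
    have hclosed : IsClosed (range g) := (isCompact_range hg).isClosed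
    suffices hcl : y ∈ closure (range g) by
      rwa [hclosed.closure_eq] at hcl
    rw [Metric.mem_closure_iff]
    intro η hη
    -- uniform continuity of g
    have hgu : UniformContinuous g := CompactSpace.uniformContinuous_of_continuous hg
    obtain ⟨δ, hδ, hδ'⟩ := Metric.uniformContinuous_iff.mp hgu (η / 2) (by positivity)
    -- endpoints and chains
    choose a ha using fun i => hs i 0
    choose b hb using fun i => hs i 1
    choose M c hc0 hcM hcst using fun i => exists_eps_chain (a i) (b i) hδ
    have hM1 : ∀ i, 0 < M i := by
      intro i
      rcases Nat.eq_zero_or_pos (M i) with h0 | h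
      · exfalso
        have hab : a i = b i := by rw [← hc0 i, ← hcM i, h0]
        have : (0 : unitInterval) = 1 := by rw [← ha i, ← hb i, hab]
        have := congrArg (fun z : unitInterval => (z : ℝ)) this
        norm_num at this
      · exact h
    -- the grid map and labelling
    set Φ : (Fin n → ℕ) → (∀ i, T i) := fun p i => c i (p i) with hΦ
    set ℓ : (Fin n → ℕ) → ℕ := fun p =>
      if h : ∃ k : ℕ, ∃ hk : k < n, (y ⟨k, hk⟩ : ℝ) < (g (Φ p) ⟨k, hk⟩ : ℝ)
      then Nat.find h else n with hℓ
    have hℓle : ∀ p, ℓ p ≤ n := by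
      intro p
      rw [hℓ]
      dsimp only
      split_ifs with h
      · obtain ⟨hk, -⟩ := Nat.find_spec h
        omega
      · exact le_rfl
    have hℓeq : ∀ p (i : Fin n), ℓ p = (i : ℕ) → (y i : ℝ) < (g (Φ p) i : ℝ) := by
      intro p i hpi
      rw [hℓ] at hpi
      dsimp only at hpi
      split_ifs at hpi with h
      · obtain ⟨hk, hlt⟩ := hpi ▸ Nat.find_spec h
        simpa using hlt
      · exact absurd hpi.symm (Nat.ne_of_lt i.isLt)
    have hℓlt : ∀ p (i : Fin n), (y i : ℝ) < (g (Φ p) i : ℝ) → ℓ p ≤ (i : ℕ) := by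
      intro p i hlt
      have hex : ∃ k : ℕ, ∃ hk : k < n, (y ⟨k, hk⟩ : ℝ) < (g (Φ p) ⟨k, hk⟩ : ℝ) :=
        ⟨(i : ℕ), i.isLt, by simpa using hlt⟩
      rw [hℓ]
      dsimp only
      rw [dif_pos hex]
      exact Nat.find_le ⟨i.isLt, by simpa using hlt⟩
    have hℓn : ∀ p, ℓ p = n → ∀ i : Fin n, (g (Φ p) i : ℝ) ≤ (y i : ℝ) := by
      intro p hpn i
      by_contra hcon
      push_neg at hcon
      have := hℓlt p i hcon
      have := i.isLt
      omega
    -- boundary values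
    have hgbd : ∀ p : Fin n → ℕ, ∀ i : Fin n,
        (u i (Φ p i) = 0 ∨ u i (Φ p i) = 1) → g (Φ p) i = u i (Φ p i) := by
      intro p i h
      exact congrFun (hbd (Φ p) ⟨i, h⟩) i
    -- Sperner hypotheses
    have H1 : ∀ p : Fin n → ℕ, (∀ i, p i ≤ M i) → ∀ i : Fin n, p i = 0 → ℓ p ≠ (i : ℕ) := by
      intro p hp i hpi hcon
      have hu0 : u i (Φ p i) = 0 := by
        rw [hΦ]
        dsimp only
        rw [hpi, hc0 i]
        exact ha i
      have hg0 : g (Φ p) i = 0 := by rw [hgbd p i (Or.inl hu0), hu0]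
      have hlt := hℓeq p i hcon
      rw [hg0] at hlt
      norm_num at hlt
      exact absurd hlt (not_lt.mpr (by exact_mod_cast hy0 i))
    have H2 : ∀ p : Fin n → ℕ, (∀ i, p i ≤ M i) → ∀ i : Fin n, p i = M i → ℓ p ≤ (i : ℕ) := by
      intro p hp i hpi
      have hu1 : u i (Φ p i) = 1 := by
        rw [hΦ]
        dsimp only
        rw [hpi, hcM i]
        exact hb i
      have hg1 : g (Φ p) i = 1 := by rw [hgbd p i (Or.inr hu1), hu1]
      apply hℓlt
      rw [hg1]
      simpa using hy1 i
    have H0 : ∀ p : Fin n → ℕ, (∀ i, p i ≤ M i) → ℓ p ≤ n := fun p _ => hℓle p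
    -- apply the cubical Sperner lemma
    have hodd := sperner_main n M hM1 ℓ H0 H1 H2
    have hpos : 0 < (CLs M ℓ).card := by
      rcases hodd with ⟨k, hk⟩
      omega
    obtain ⟨s, hsmem⟩ := Finset.card_pos.mp hpos
    have hsCL : CLpred ℓ s := mem_CLs.mp hsmem
    -- extract the approximate solution
    obtain ⟨jstar, hjstar⟩ := hsCL n (by omega)
    have hcell : ∀ (j j' : Fin (n+1)) (i : Fin n),
        dist (Φ (vtx s j) i) (Φ (vtx s j') i) < δ := by
      intro j j' i
      have h1 := (s.1 i).isLt
      rw [hΦ]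
      dsimp only
      unfold vtx
      split_ifs
      · rw [dist_self]; exact hδ
      · rw [dist_comm]
        simpa using hcst i (s.1 i) h1
      · simpa using hcst i (s.1 i) h1
      · rw [dist_self]; exact hδ
    have hdist : ∀ (j : Fin (n+1)), dist (g (Φ (vtx s j))) (g (Φ (vtx s jstar))) < η / 2 := by
      intro j
      apply hδ'
      rw [dist_pi_lt_iff hδ]
      intro i
      exact hcell j jstar i
    refine ⟨g (Φ (vtx s jstar)), ⟨_, rfl⟩, ?_⟩
    rw [dist_pi_lt_iff hη]
    intro i
    obtain ⟨ji, hji⟩ := hsCL (i : ℕ) (by have := i.isLt; omega)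
    have hlow : (y i : ℝ) < (g (Φ (vtx s ji)) i : ℝ) := hℓeq _ i hji
    have hup : (g (Φ (vtx s jstar)) i : ℝ) ≤ (y i : ℝ) := hℓn _ hjstar i
    have hco : dist (g (Φ (vtx s ji)) i) (g (Φ (vtx s jstar)) i) < η / 2 :=
      lt_of_le_of_lt (dist_le_pi_dist _ _ i) (hdist ji)
    rw [Subtype.dist_eq, Real.dist_eq] at hco ⊢
    rw [abs_lt] at hco ⊢
    constructor <;> [linarith [hco.1]; linarith [hco.2]]
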